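/- Let f : ℝⁿ → ℝ be convex and differentiable, let θ* ∈ ℝⁿ be a global minimizer of f, and consider one step of the stochastic MTSL iteration at time t satisfying: unbiasedness E[g̃(t) | ℱ_t] = ∇f(θ(t)) almost surely; second-moment bound E[‖g̃(t)‖²] ≤ G²; and the alignment condition that almost surely ∂ᵢf(θ(t)) · (θᵢ(t) − θ*ᵢ) ≥ 0 for every coordinate i. Assume f(θ(t)) and ‖θ(t) − θ*‖² are integrable. Then E[ ‖θ(t+1) − θ*‖² ] ≤ E[ ‖θ(t) − θ*‖² ] − 2 η_min(t) E[ f(θ(t)) − f(θ*) ] + η_max(t)² G². -/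

import Mathlib

open MeasureTheory Finset

/-- The `i`-th partial derivative of `f : ℝⁿ → ℝ` at `x`. -/
noncomputable def pderiv' {n : ℕ} (f : (Fin n → ℝ) → ℝ) (i : Fin n) (x : Fin n → ℝ) : ℝ :=
  fderiv ℝ f x (Pi.single i 1)

section aux

variable {Ω : Type*} {m0 : MeasurableSpace Ω} {μ : Measure Ω}

lemma integrable_mul_of_memL2 {f g : Ω → ℝ} (hf : MemLp f 2 μ) (hg : MemLp g 2 μ) :
    Integrable (fun ω => f ω * g ω) μ := by
  refine ((hf.integrable_sq.add hg.integrable_sq).div_const 2).mono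
    (hf.aestronglyMeasurable.mul hg.aestronglyMeasurable) ?_
  filter_upwards with ω
  simp only [Pi.add_apply, norm_mul, Real.norm_eq_abs]
  rw [abs_of_nonneg (by positivity : (0:ℝ) ≤ (f ω ^ 2 + g ω ^ 2) / 2)]
  nlinarith [sq_nonneg (|f ω| - |g ω|), sq_abs (f ω), sq_abs (g ω)]

lemma integrable_apply_pi {n : ℕ} {g : Ω → Fin n → ℝ} (hg : Integrable g μ) (i : Fin n) :
    Integrable (fun ω => g ω i) μ := by
  refine hg.norm.mono ?_ ?_
  · exact (continuous_apply i).comp_aestronglyMeasurable hg.aestronglyMeasurable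
  · filter_upwards with ω
    simpa using norm_le_pi_norm (g ω) i

lemma memL2_apply_pi {n : ℕ} {g : Ω → Fin n → ℝ} (hg : MemLp g 2 μ) (i : Fin n) :
    MemLp (fun ω => g ω i) 2 μ := by
  refine hg.of_le ((continuous_apply i).comp_aestronglyMeasurable hg.aestronglyMeasurable) ?_
  filter_upwards with ω
  simpa using norm_le_pi_norm (g ω) i

lemma integral_pi_apply {n : ℕ} {g : Ω → Fin n → ℝ} (hg : Integrable g μ) (i : Fin n) :
    ∫ ω, g ω i ∂μ = (∫ ω, g ω ∂μ) i := by
  have := (ContinuousLinearMap.proj (R := ℝ) (φ := fun _ : Fin n => ℝ) i).integral_comp_comm hg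
  simpa using this

lemma condexp_apply_comp {n : ℕ} {F : MeasurableSpace Ω} (hF : F ≤ m0) [IsFiniteMeasure μ]
    {g : Ω → Fin n → ℝ} (hg : Integrable g μ) (i : Fin n) :
    (fun ω => (μ[g|F]) ω i) =ᵐ[μ] μ[fun ω => g ω i | F] := by
  have hcm : Integrable (μ[g|F]) μ := integrable_condExp
  have h2 : ∀ s : Set Ω, MeasurableSet[F] s → μ s < ⊤ →
      Integrable (fun ω => (μ[g|F]) ω i) (μ.restrict s) :=
    fun s _ _ => (integrable_apply_pi hcm i).restrict
  have h3 : ∀ s : Set Ω, MeasurableSet[F] s → μ s < ⊤ →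
      ∫ ω in s, (μ[g|F]) ω i ∂μ = ∫ ω in s, g ω i ∂μ := by
    intro s hs hμs
    rw [integral_pi_apply hcm.restrict i, integral_pi_apply hg.restrict i,
      setIntegral_condExp hF hg hs]
  have h1 : StronglyMeasurable[F] (fun ω => (μ[g|F]) ω i) :=
      (continuous_apply i).comp_stronglyMeasurable stronglyMeasurable_condExp
  exact ae_eq_condExp_of_forall_setIntegral_eq hF (integrable_apply_pi hg i)
    h2 h3 h1.aestronglyMeasurable

lemma convex_grad_ineq {n : ℕ} {f : (Fin n → ℝ) → ℝ} (hconv : ConvexOn ℝ Set.univ f)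
    (hdiff : Differentiable ℝ f) (x y : Fin n → ℝ) :
    f x + fderiv ℝ f x (y - x) ≤ f y := by
  set v := y - x with hv
  have hgconv : ConvexOn ℝ Set.univ (fun t : ℝ => f (x + t • v)) := by
    have h0 := hconv.comp_affineMap (AffineMap.lineMap x y)
    have he : (fun t : ℝ => f (x + t • v)) = f ∘ (AffineMap.lineMap x y) := by
      funext t
      simp [AffineMap.lineMap_apply, hv, add_comm]
    rw [he]
    simpa using h0
  have hcurve : HasDerivAt (fun t : ℝ => x + t • v) v 0 := by
    simpa using ((hasDerivAt_id (0:ℝ)).smul_const v).const_add x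
  have hfd : HasFDerivAt f (fderiv ℝ f x) ((fun t : ℝ => x + t • v) 0) := by
    simpa using (hdiff x).hasFDerivAt
  have hg : HasDerivAt (fun t : ℝ => f (x + t • v)) (fderiv ℝ f x v) 0 :=
    hfd.comp_hasDerivAt 0 hcurve
  have hs := hgconv.le_slope_of_hasDerivAt (Set.mem_univ (0:ℝ)) (Set.mem_univ 1) one_pos hg
  rw [slope_def_field] at hs
  simp only [zero_smul, add_zero, one_smul, sub_zero, div_one] at hs
  have hxy : x + v = y := by simp [hv]
  rw [hxy] at hs
  linarith

lemma grad_sum_ineq {n : ℕ} {f : (Fin n → ℝ) → ℝ} (hconv : ConvexOn ℝ Set.univ f)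
    (hdiff : Differentiable ℝ f) (x y : Fin n → ℝ) :
    f x - f y ≤ ∑ i, (x i - y i) * pderiv' f i x := by
  have h := convex_grad_ineq hconv hdiff x y
  have hsum : fderiv ℝ f x (x - y) = ∑ i, (x i - y i) * pderiv' f i x := by
    have hrepr : (x - y) = ∑ i, (x i - y i) • (Pi.single i (1:ℝ) : Fin n → ℝ) := by
      funext j
      simp [Finset.sum_apply, Pi.single_apply]
    rw [hrepr, map_sum]
    refine Finset.sum_congr rfl fun i _ => ?_
    rw [ContinuousLinearMap.map_smul]
    simp [pderiv', smul_eq_mul]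
  have hneg : fderiv ℝ f x (y - x) = - fderiv ℝ f x (x - y) := by
    rw [← map_neg]; congr 1; abel
  rw [hneg] at h
  rw [← hsum]
  linarith

end aux

/-- One step of the stochastic MTSL iteration for a convex differentiable `f` with global
minimizer `θ*`, unbiased gradient estimate, second-moment bound `E‖g̃(t)‖² ≤ G²`, and the
coordinatewise alignment condition `∂ᵢf(θ(t))·(θᵢ(t) − θ*ᵢ) ≥ 0` a.s.:
`E‖θ(t+1) − θ*‖² ≤ E‖θ(t) − θ*‖² − 2 η_min(t) E[f(θ(t)) − f(θ*)] + η_max(t)² G²`. -/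
theorem mtsl_sgd_convex_one_step {n : ℕ} [NeZero n] {Ω : Type*} {m0 : MeasurableSpace Ω}
    (μ : Measure Ω) [IsProbabilityMeasure μ]
    (F : MeasurableSpace Ω) (hF : F ≤ m0)
    (f : (Fin n → ℝ) → ℝ)
    (hconv : ConvexOn ℝ Set.univ f) (hdiff : Differentiable ℝ f)
    (θs : Fin n → ℝ) (hmin : ∀ x, f θs ≤ f x)
    (η : Fin n → ℝ) (hη : ∀ i, 0 < η i)
    (G : ℝ)
    (θ gt : Ω → Fin n → ℝ)
    (hθmeas : Measurable[F] θ)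
    (hgt2 : MemLp gt 2 μ)
    (hunbiased : μ[gt | F] =ᵐ[μ] fun ω => fun i => pderiv' f i (θ ω))
    (hG : ∫ ω, ∑ i, (gt ω i) ^ 2 ∂μ ≤ G ^ 2)
    (halign : ∀ᵐ ω ∂μ, ∀ i, 0 ≤ pderiv' f i (θ ω) * (θ ω i - θs i))
    (hfint : Integrable (fun ω => f (θ ω)) μ)
    (hθint : Integrable (fun ω => ∑ i, (θ ω i - θs i) ^ 2) μ) :
    ∫ ω, ∑ i, ((θ ω i - η i * gt ω i) - θs i) ^ 2 ∂μ ≤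
      (∫ ω, ∑ i, (θ ω i - θs i) ^ 2 ∂μ)
        - 2 * (Finset.univ.inf' Finset.univ_nonempty η) * ∫ ω, (f (θ ω) - f θs) ∂μ
        + (Finset.univ.sup' Finset.univ_nonempty η) ^ 2 * G ^ 2 := by
  set ηmin := Finset.univ.inf' Finset.univ_nonempty η with hηmin
  set ηmax := Finset.univ.sup' Finset.univ_nonempty η with hηmax
  have hηmin_pos : 0 < ηmin := by
    obtain ⟨i, _, hi⟩ := Finset.exists_mem_eq_inf' Finset.univ_nonempty η
    rw [hηmin, hi]; exact hη i
  have hηle : ∀ i, ηmin ≤ η i := fun i => Finset.inf'_le _ (Finset.mem_univ i)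
  have hηge : ∀ i, η i ≤ ηmax := fun i => Finset.le_sup' _ (Finset.mem_univ i)
  have hgi : ∀ i, MemLp (fun ω => gt ω i) 2 μ := fun i => memL2_apply_pi hgt2 i
  have hθm0 : Measurable[m0] θ := hθmeas.mono hF le_rfl
  have haiMeas : ∀ i, AEStronglyMeasurable[m0] (fun ω => θ ω i - θs i) μ := fun i =>
    (((measurable_pi_apply i).comp hθm0).sub measurable_const).aestronglyMeasurable
  have hai : ∀ i, MemLp (fun ω => θ ω i - θs i) 2 μ := by
    intro i
    rw [memLp_two_iff_integrable_sq (haiMeas i)]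
    refine hθint.mono ((haiMeas i).pow 2) ?_
    filter_upwards with ω
    rw [Real.norm_eq_abs, Real.norm_eq_abs, abs_of_nonneg (by positivity),
      abs_of_nonneg (Finset.sum_nonneg fun j _ => sq_nonneg _)]
    exact Finset.single_le_sum (f := fun j => (θ ω j - θs j) ^ 2)
      (fun j _ => sq_nonneg _) (Finset.mem_univ i)
  have hmul : ∀ i, Integrable (fun ω => (θ ω i - θs i) * gt ω i) μ := fun i =>
    integrable_mul_of_memL2 (hai i) (hgi i)
  have hgtint : Integrable gt μ := hgt2.integrable one_le_two
  have hcond : ∀ i, μ[(fun ω => gt ω i)|F] =ᵐ[μ] fun ω => pderiv' f i (θ ω) := by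
    intro i
    refine (condexp_apply_comp hF hgtint i).symm.trans ?_
    filter_upwards [hunbiased] with ω hω
    simp [hω]
  have hce : ∀ i, μ[(fun ω => (θ ω i - θs i) * gt ω i)|F]
      =ᵐ[μ] fun ω => (θ ω i - θs i) * pderiv' f i (θ ω) := by
    intro i
    have hsm : StronglyMeasurable[F] (fun ω => θ ω i - θs i) :=
      (((measurable_pi_apply i).comp hθmeas).sub measurable_const).stronglyMeasurable
    refine (condExp_mul_of_stronglyMeasurable_left (μ := μ) (m := F) hsm (hmul i)
      ((hgi i).integrable one_le_two)).trans ?_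
    filter_upwards [hcond i] with ω hω
    simp only [Pi.mul_apply]
    rw [hω]
  have hkey : ∀ i, ∫ ω, (θ ω i - θs i) * gt ω i ∂μ
      = ∫ ω, (θ ω i - θs i) * pderiv' f i (θ ω) ∂μ := by
    intro i
    calc ∫ ω, (θ ω i - θs i) * gt ω i ∂μ
        = ∫ ω, (μ[(fun ω => (θ ω i - θs i) * gt ω i)|F]) ω ∂μ :=
          (integral_condExp hF).symm
      _ = ∫ ω, (θ ω i - θs i) * pderiv' f i (θ ω) ∂μ := integral_congr_ae (hce i)
  have hpint : ∀ i, Integrable (fun ω => (θ ω i - θs i) * pderiv' f i (θ ω)) μ := fun i =>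
    (integrable_condExp (m := F)).congr (hce i)
  have hB : Integrable (fun ω => ∑ i, η i * ((θ ω i - θs i) * gt ω i)) μ :=
    integrable_finset_sum _ fun i _ => (hmul i).const_mul (η i)
  have hCsum : Integrable (fun ω => ∑ i, (gt ω i) ^ 2) μ :=
    integrable_finset_sum _ fun i _ => (hgi i).integrable_sq
  have hC : Integrable (fun ω => ∑ i, (η i) ^ 2 * (gt ω i) ^ 2) μ :=
    integrable_finset_sum _ fun i _ => ((hgi i).integrable_sq).const_mul _
  have hexp : ∫ ω, ∑ i, ((θ ω i - η i * gt ω i) - θs i) ^ 2 ∂μ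
      = (∫ ω, ∑ i, (θ ω i - θs i) ^ 2 ∂μ)
        - 2 * (∫ ω, ∑ i, η i * ((θ ω i - θs i) * gt ω i) ∂μ)
        + ∫ ω, ∑ i, (η i) ^ 2 * (gt ω i) ^ 2 ∂μ := by
    have h1 : (fun ω => ∑ i, ((θ ω i - η i * gt ω i) - θs i) ^ 2)
        = fun ω => (∑ i, (θ ω i - θs i) ^ 2)
          - 2 * (∑ i, η i * ((θ ω i - θs i) * gt ω i))
          + ∑ i, (η i) ^ 2 * (gt ω i) ^ 2 := by
      funext ω
      rw [Finset.mul_sum, ← Finset.sum_sub_distrib, ← Finset.sum_add_distrib]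
      refine Finset.sum_congr rfl fun i _ => ?_
      ring
    have hB2 : Integrable (fun ω => 2 * ∑ i, η i * ((θ ω i - θs i) * gt ω i)) μ :=
      hB.const_mul 2
    have hAB : Integrable (fun ω => (∑ i, (θ ω i - θs i) ^ 2)
        - 2 * ∑ i, η i * ((θ ω i - θs i) * gt ω i)) μ := hθint.sub hB2
    rw [h1, integral_add hAB hC, integral_sub hθint hB2, integral_const_mul]
  rw [hexp]
  have hJnn : ∀ i, 0 ≤ ∫ ω, (θ ω i - θs i) * pderiv' f i (θ ω) ∂μ := by
    intro i
    refine integral_nonneg_of_ae ?_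
    filter_upwards [halign] with ω hω
    simp only [Pi.zero_apply]
    nlinarith [hω i]
  have hBsplit : ∫ ω, ∑ i, η i * ((θ ω i - θs i) * gt ω i) ∂μ
      = ∑ i, η i * ∫ ω, (θ ω i - θs i) * pderiv' f i (θ ω) ∂μ := by
    rw [integral_finset_sum _ fun i _ => (hmul i).const_mul (η i)]
    refine Finset.sum_congr rfl fun i _ => ?_
    rw [integral_const_mul, hkey i]
  have hsumJ : ∫ ω, (f (θ ω) - f θs) ∂μ
      ≤ ∑ i, ∫ ω, (θ ω i - θs i) * pderiv' f i (θ ω) ∂μ := by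
    rw [← integral_finset_sum _ fun i _ => hpint i]
    refine integral_mono (hfint.sub (integrable_const _))
      (integrable_finset_sum _ fun i _ => hpint i) ?_
    intro ω
    exact grad_sum_ineq hconv hdiff (θ ω) θs
  have hcross : ηmin * ∫ ω, (f (θ ω) - f θs) ∂μ
      ≤ ∫ ω, ∑ i, η i * ((θ ω i - θs i) * gt ω i) ∂μ := by
    rw [hBsplit]
    calc ηmin * ∫ ω, (f (θ ω) - f θs) ∂μ
        ≤ ηmin * ∑ i, ∫ ω, (θ ω i - θs i) * pderiv' f i (θ ω) ∂μ :=
          mul_le_mul_of_nonneg_left hsumJ hηmin_pos.le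
      _ = ∑ i, ηmin * ∫ ω, (θ ω i - θs i) * pderiv' f i (θ ω) ∂μ := Finset.mul_sum _ _ _
      _ ≤ ∑ i, η i * ∫ ω, (θ ω i - θs i) * pderiv' f i (θ ω) ∂μ :=
          Finset.sum_le_sum fun i _ => mul_le_mul_of_nonneg_right (hηle i) (hJnn i)
  have hquad : ∫ ω, ∑ i, (η i) ^ 2 * (gt ω i) ^ 2 ∂μ ≤ ηmax ^ 2 * G ^ 2 := by
    have h1 : ∫ ω, ∑ i, (η i) ^ 2 * (gt ω i) ^ 2 ∂μ
        ≤ ∫ ω, ηmax ^ 2 * ∑ i, (gt ω i) ^ 2 ∂μ := by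
      refine integral_mono hC (hCsum.const_mul _) ?_
      intro ω
      dsimp only
      rw [Finset.mul_sum]
      refine Finset.sum_le_sum fun i _ => ?_
      have h2 : (η i) ^ 2 ≤ ηmax ^ 2 := by nlinarith [hηge i, hη i]
      exact mul_le_mul_of_nonneg_right h2 (sq_nonneg _)
    rw [integral_const_mul] at h1
    exact h1.trans (mul_le_mul_of_nonneg_left hG (sq_nonneg _))
  linarith
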